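/- Let T be a complete first-order theory and Δ(x,y) a set of formulas over ∅. Suppose that for every formula φ(x,y) ∈ Δ there is a formula θ_φ(x,z) such that for any finite φ-type r(x) over a model M ⊨ T and any finite set A ⊆ M^x of realizations of r, there is b ∈ M^z with θ_φ(a,b) holding for all a ∈ A and θ_φ(x,b) ⊢ r(x). Then T has singular compactness for Δ: whenever M ⊨ T is μ-saturated for a singular cardinal μ > |T|, every Δ-type over a subset of M of size ≤ μ is realized in M. -/

import Mathlib

open FirstOrder FirstOrder.Language Cardinal Set

universe u

namespace ShredPaper

variable {L : FirstOrder.Language.{u, u}} {M : Type u} [L.Structure M]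

/-- The restriction of the sequence `b` of `γ`-tuples from `M` (indexed by ordinals)
to the indices lying in `S` is an indiscernible sequence over the parameter set `A`. -/
def IsIndiscOn (A : Set M) {γ : Type*} (S : Set Ordinal.{u}) (b : Ordinal.{u} → γ → M) : Prop :=
  ∀ (n : ℕ) (φ : L.Formula ((Fin n × γ) ⊕ ↥A)) (s t : Fin n → Ordinal.{u}),
    StrictMono s → StrictMono t → (∀ i, s i ∈ S) → (∀ i, t i ∈ S) →
    (φ.Realize (Sum.elim (fun p => b (s p.1) p.2) Subtype.val) ↔
      φ.Realize (Sum.elim (fun p => b (t p.1) p.2) Subtype.val))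

/-- `b` (restricted to indices `< lam.ord`) witnesses that `φ(x; a)` `lam`-shreds over `A`:
it is an `A`-indiscernible sequence such that for no `α < lam` and no realization `c` of
`φ(x; a)` is the end segment `b ↾ [α, lam)` indiscernible over `A ∪ c`. -/
def IsShredWitness (lam : Cardinal.{u}) {γx γa γb : Type*} (φ : L.Formula (γx ⊕ γa))
    (a : γa → M) (A : Set M) (b : Ordinal.{u} → γb → M) : Prop :=
  IsIndiscOn (L := L) A (Set.Iio lam.ord) b ∧
    ∀ α < lam.ord, ∀ c : γx → M, φ.Realize (Sum.elim c a) →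
      ¬ IsIndiscOn (L := L) (A ∪ Set.range c) (Set.Ico α lam.ord) b

/-- `φ(x; a)` `lam`-shreds over `A`. -/
def LamShreds (lam : Cardinal.{u}) {γx γa : Type*} (φ : L.Formula (γx ⊕ γa))
    (a : γa → M) (A : Set M) : Prop :=
  ∃ (γb : Type u) (b : Ordinal.{u} → γb → M), IsShredWitness lam φ a A b

/-- The cardinal `(|T| + |A|)⁺`. -/
noncomputable def shredLam (L : FirstOrder.Language.{u, u}) {M : Type u} (A : Set M) : Cardinal.{u} :=
  Order.succ (L.card + ℵ₀ + #A)

/-- `φ(x; a)` shreds over `A`, i.e. `(|T| + |A|)⁺`-shreds over `A`. -/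
def Shreds {γx γa : Type*} (φ : L.Formula (γx ⊕ γa)) (a : γa → M) (A : Set M) : Prop :=
  LamShreds (shredLam L A) φ a A

/-- `φ(x; a)` explicitly `lam`-shreds over `A`: there are `n`, an `A`-indiscernible
sequence `b` of length `lam`, increasing maps `η l : n → 2n` and formulas
`ψ l (x; y₀, …, y_{n-1}; a'_l)` with parameters from `A` such that for every `δ < lam`
divisible by `2n`, `φ(x;a)` implies the disjunction over `l < k` of
`ψ l (x; b_δ, …, b_{δ+n-1}) ↔ ¬ ψ l (x; b_{δ+η l 0}, …, b_{δ + η l (n-1)})`. -/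
def ExplLamShreds (lam : Cardinal.{u}) {γx γa : Type*} (φ : L.Formula (γx ⊕ γa))
    (a : γa → M) (A : Set M) : Prop :=
  ∃ (γb : Type u) (n k : ℕ) (b : Ordinal.{u} → γb → M)
    (η : Fin k → Fin n → Fin (2 * n)) (ψ : Fin k → L.Formula (γx ⊕ ((Fin n × γb) ⊕ ↥A))),
    IsIndiscOn (L := L) A (Set.Iio lam.ord) b ∧ (∀ l, StrictMono (η l)) ∧
    ∀ δ < lam.ord, ((2 * n : ℕ) : Ordinal.{u}) ∣ δ →
      ∀ c : γx → M, φ.Realize (Sum.elim c a) →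
        ∃ l : Fin k,
          ¬ ((ψ l).Realize
              (Sum.elim c (Sum.elim (fun p => b (δ + ((p.1 : ℕ) : Ordinal.{u})) p.2) Subtype.val)) ↔
            (ψ l).Realize
              (Sum.elim c (Sum.elim (fun p => b (δ + (((η l p.1 : Fin (2 * n)) : ℕ) : Ordinal.{u})) p.2) Subtype.val)))

/-- A set of formulas over parameters `B` in the variables `γ` is finitely satisfiable in `M`. -/
def FinSat (B : Set M) {γ : Type*} (p : Set (L.Formula (γ ⊕ ↥B))) : Prop :=
  ∀ F : Finset (L.Formula (γ ⊕ ↥B)), ↑F ⊆ p →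
    ∃ c : γ → M, ∀ φ ∈ F, φ.Realize (Sum.elim c Subtype.val)

/-- `p` is a complete `m`-type over the parameter set `B` (working inside the monster `M`,
consistency is finite satisfiability in `M`). -/
def IsCompleteType (B : Set M) (m : ℕ) (p : Set (L.Formula (Fin m ⊕ ↥B))) : Prop :=
  FinSat B p ∧ ∀ φ : L.Formula (Fin m ⊕ ↥B), φ ∈ p ∨ φ.not ∈ p

/-- The type `p` over `B` shreds over `A`: it implies a formula which shreds over `A`. -/
def TypeShreds {m : ℕ} (B : Set M) (p : Set (L.Formula (Fin m ⊕ ↥B))) (A : Set M) : Prop :=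
  ∃ (γa : Type u) (χ : L.Formula (Fin m ⊕ γa)) (a : γa → M)
    (F : Finset (L.Formula (Fin m ⊕ ↥B))),
    ↑F ⊆ p ∧
    (∀ c : Fin m → M, (∀ φ ∈ F, φ.Realize (Sum.elim c Subtype.val)) → χ.Realize (Sum.elim c a)) ∧
    Shreds (M := M) χ a A

/-- The type `p` over `B` shreds over `A ⊆ B` with a built-in witness: it implies a formula
which shreds over `A`, with a witnessing `A`-indiscernible sequence contained in `B`. -/
def TypeShredsBuiltIn {m : ℕ} (B : Set M) (p : Set (L.Formula (Fin m ⊕ ↥B))) (A : Set M) :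
    Prop :=
  A ⊆ B ∧
  ∃ (γa γb : Type u) (χ : L.Formula (Fin m ⊕ γa)) (a : γa → M)
    (F : Finset (L.Formula (Fin m ⊕ ↥B))) (b : Ordinal.{u} → γb → M),
    ↑F ⊆ p ∧
    (∀ c : Fin m → M, (∀ φ ∈ F, φ.Realize (Sum.elim c Subtype.val)) → χ.Realize (Sum.elim c a)) ∧
    (∀ β < (shredLam L A).ord, ∀ j, b β j ∈ B) ∧
    IsShredWitness (M := M) (shredLam L A) χ a A b

/-- Restriction of a type over `B` to a type over `B' ⊆ B`. -/
def restrictType {B B' : Set M} (h : B' ⊆ B) {m : ℕ}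
    (p : Set (L.Formula (Fin m ⊕ ↥B))) : Set (L.Formula (Fin m ⊕ ↥B')) :=
  {φ | Formula.relabel (Sum.map id (Set.inclusion h)) φ ∈ p}

/-- There are an increasing continuous chain of (elementary sub)models `⟨M_i : i ≤ κ⟩` of the
monster and a complete `m`-type `p` over `M_κ = ⋃_{i<κ} M_i` such that `p ↾ M_{i+1}` shreds
over `M_i` with a built-in witness, for every `i < κ`. -/
def HasShreddingChain (L : FirstOrder.Language.{u, u}) (M : Type u) [L.Structure M] (m : ℕ)
    (κ : Cardinal.{u}) : Prop :=
  ∃ (Mo : Ordinal.{u} → L.ElementarySubstructure M)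
    (p : Set (L.Formula (Fin m ⊕ ↥(Mo κ.ord : Set M)))),
    (∀ i j : Ordinal.{u}, i ≤ j → j ≤ κ.ord → (Mo i : Set M) ⊆ (Mo j : Set M)) ∧
    (∀ δ ≤ κ.ord, Order.IsSuccLimit δ →
      (Mo δ : Set M) = ⋃ (i : Ordinal.{u}) (_ : i < δ), (Mo i : Set M)) ∧
    IsCompleteType (Mo κ.ord : Set M) m p ∧
    ∀ i < κ.ord, ∀ h : (Mo (i + 1) : Set M) ⊆ (Mo κ.ord : Set M),
      TypeShredsBuiltIn (Mo (i + 1) : Set M) (restrictType h p) (Mo i : Set M)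

/-- `κ` is a regular cardinal such that there is no shredding chain (for `m`-types) of
length `κ`; `κ^m_shred(T)` is the least such cardinal (`∞` if there is none). -/
def ShredBoundedAt (L : FirstOrder.Language.{u, u}) (M : Type u) [L.Structure M] (m : ℕ)
    (κ : Cardinal.{u}) : Prop :=
  κ.IsRegular ∧ ¬ HasShreddingChain L M m κ

/-- `κ^m_shred(T)` (meaningful only when the defining set is nonempty, i.e. when it is `< ∞`). -/
noncomputable def kappaShredM (L : FirstOrder.Language.{u, u}) (M : Type u) [L.Structure M] (m : ℕ) :
    Cardinal.{u} :=
  sInf {κ : Cardinal.{u} | ShredBoundedAt L M m κ}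

/-- `T` is unshreddable: `κ^m_shred(T) < ∞` for every `m`, i.e. `κ_shred(T) < ∞`. -/
def Unshreddable (L : FirstOrder.Language.{u, u}) (M : Type u) [L.Structure M] : Prop :=
  ∀ m : ℕ, {κ : Cardinal.{u} | ShredBoundedAt L M m κ}.Nonempty

/-- `κ_shred(T) = sup_m κ^m_shred(T)`. -/
noncomputable def kappaShred (L : FirstOrder.Language.{u, u}) (M : Type u) [L.Structure M] : Cardinal.{u} :=
  ⨆ m : ℕ, kappaShredM L M m

/-- `M` is a monster model (for its complete theory): it is `κbar`-saturated and strongly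
`κbar`-homogeneous. -/
structure IsMonster (L : FirstOrder.Language.{u, u}) (M : Type u) [L.Structure M] (κbar : Cardinal.{u}) :
    Prop where
  saturated : ∀ (γ : Type u) (A : Set M) (p : Set (L.Formula (γ ⊕ ↥A))),
    #γ < κbar → #A < κbar → FinSat A p →
    ∃ c : γ → M, ∀ φ ∈ p, φ.Realize (Sum.elim c Subtype.val)
  homogeneous : ∀ (A : Set M) (f : ↥A → M), #A < κbar →
    (∀ (n : ℕ) (φ : L.Formula (Fin n)) (v : Fin n → ↥A),
      φ.Realize (fun i => ((v i : M))) ↔ φ.Realize (fun i => f (v i))) →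
    ∃ σ : M ≃[L] M, ∀ x : ↥A, σ x = f x

/-- The formula `θ(x; y)` has the independence property (witnessed in `M`). -/
def HasIP {γ δ : Type*} (θ : L.Formula (γ ⊕ δ)) : Prop :=
  ∀ n : ℕ, ∃ (av : Fin n → γ → M) (bv : Finset (Fin n) → δ → M),
    ∀ (i : Fin n) (w : Finset (Fin n)),
      θ.Realize (Sum.elim (av i) (bv w)) ↔ i ∈ w

/-- The theory of `M` has the independence property. -/
def HasIPTheory (L : FirstOrder.Language.{u, u}) (M : Type u) [L.Structure M] : Prop :=
  ∃ (γ δ : Type u) (θ : L.Formula (γ ⊕ δ)), HasIP (M := M) θ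

/-- `φ(x; a)` divides over `A`: there is an `A`-indiscernible sequence `⟨a_i : i < ω⟩`
starting with `a` such that `{φ(x; a_i) : i < ω}` is inconsistent. -/
def Divides {γx γa : Type*} (φ : L.Formula (γx ⊕ γa)) (a : γa → M) (A : Set M) : Prop :=
  ∃ b : Ordinal.{u} → γa → M,
    b 0 = a ∧ IsIndiscOn (L := L) A (Set.Iio (Cardinal.aleph0.{u}).ord) b ∧
    ∃ F : Finset Ordinal.{u}, (∀ i ∈ F, i < (Cardinal.aleph0.{u}).ord) ∧
      ¬ ∃ c : γx → M, ∀ i ∈ F, φ.Realize (Sum.elim c (b i))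

/-- `φ(x; a)` forks over `A`: it implies a finite disjunction of formulas, each of which
divides over `A`. -/
def Forks {γx γa : Type*} (φ : L.Formula (γx ⊕ γa)) (a : γa → M) (A : Set M) : Prop :=
  ∃ (k : ℕ) (γ : Fin k → Type u) (ψ : ∀ i, L.Formula (γx ⊕ γ i)) (cv : ∀ i, γ i → M),
    (∀ i, Divides (ψ i) (cv i) A) ∧
    ∀ d : γx → M, φ.Realize (Sum.elim d a) → ∃ i, (ψ i).Realize (Sum.elim d (cv i))

/-- The type `p` over `B` forks over `A`: it implies a formula which forks over `A`. -/
def TypeForks {m : ℕ} (B : Set M) (p : Set (L.Formula (Fin m ⊕ ↥B))) (A : Set M) : Prop :=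
  ∃ (γa : Type u) (χ : L.Formula (Fin m ⊕ γa)) (a : γa → M)
    (F : Finset (L.Formula (Fin m ⊕ ↥B))),
    ↑F ⊆ p ∧
    (∀ c : Fin m → M, (∀ φ ∈ F, φ.Realize (Sum.elim c Subtype.val)) → χ.Realize (Sum.elim c a)) ∧
    Forks (M := M) χ a A

/-- `κ` witnesses simplicity of the theory of `M`: every complete type over any set `A`
does not fork over some subset of `A` of size `< κ`.  `T` is simple iff some `κ` is a
simplicity bound; `κ_r(T)` is the least regular simplicity bound. -/
def IsSimpleBound (L : FirstOrder.Language.{u, u}) (M : Type u) [L.Structure M] (κ : Cardinal.{u}) : Prop :=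
  ∀ (m : ℕ) (A : Set M) (p : Set (L.Formula (Fin m ⊕ ↥A))), IsCompleteType A m p →
    ∃ B : Set M, B ⊆ A ∧ #B < κ ∧ ¬ TypeForks A p B

/-- The set `N` (underlying an elementary submodel of the monster `M`) is `μ`-saturated. -/
def SetSaturated (N : Set M) (μ : Cardinal.{u}) : Prop :=
  ∀ A : Set M, A ⊆ N → #A < μ →
    ∀ p : Set (L.Formula (Fin 1 ⊕ ↥A)), FinSat (L := L) A p →
      ∃ c ∈ N, ∀ φ ∈ p, φ.Realize (Sum.elim (fun _ => c) Subtype.val)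

/-- The structure `N` is a `μ`-saturated model. -/
def IsSaturatedModel (L : FirstOrder.Language.{u, u}) (N : Type u) [L.Structure N] (μ : Cardinal.{u}) :
    Prop :=
  ∀ (k : ℕ) (A : Set N) (p : Set (L.Formula (Fin k ⊕ ↥A))), #A < μ → FinSat (L := L) A p →
    ∃ c : Fin k → N, ∀ φ ∈ p, φ.Realize (Sum.elim c Subtype.val)

/-- The formula `θ(x; y)` has SOP₁ (witnessed in `M`). -/
def HasSOP1 {γ δ : Type*} (θ : L.Formula (γ ⊕ δ)) : Prop :=
  ∃ a : List Bool → δ → M,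
    (∀ η : ℕ → Bool, ∀ K : ℕ, ∃ c : γ → M,
      ∀ k ≤ K, θ.Realize (Sum.elim c (a (List.ofFn fun i : Fin k => η i)))) ∧
    (∀ ρ σ : List Bool,
      ¬ ∃ c : γ → M, θ.Realize (Sum.elim c (a (ρ ++ (false :: σ)))) ∧
        θ.Realize (Sum.elim c (a (ρ ++ [true]))))

/-- The theory of `M` has TP₂. -/
def HasTP2 (L : FirstOrder.Language.{u, u}) (M : Type u) [L.Structure M] : Prop :=
  ∃ (γ δ : Type u) (θ : L.Formula (γ ⊕ δ)) (k : ℕ) (a : ℕ → ℕ → δ → M),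
    (∀ f : ℕ → ℕ, ∀ F : Finset ℕ, ∃ c : γ → M, ∀ i ∈ F, θ.Realize (Sum.elim c (a i (f i)))) ∧
    ∀ i : ℕ, ∀ s : Finset ℕ, s.card = k → ¬ ∃ c : γ → M, ∀ j ∈ s, θ.Realize (Sum.elim c (a i j))

/-- The theory of `M` has SOP_n. -/
def HasSOPn (L : FirstOrder.Language.{u, u}) (M : Type u) [L.Structure M] (n : ℕ) : Prop :=
  ∃ (δ : Type u) (θ : L.Formula (δ ⊕ δ)) (a : ℕ → δ → M),
    (∀ i j : ℕ, θ.Realize (Sum.elim (a i) (a j)) ↔ i < j) ∧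
    ¬ ∃ c : Fin n → δ → M, ∀ i : Fin n, θ.Realize (Sum.elim (c i) (c (i + ⟨1 % n, Nat.mod_lt 1 (Fin.pos i)⟩)))

section SingularCompactnessHelpers

variable {n m mzv : ℕ} {B : Set M}

/-- Substitute parameters (from a set `B`) into the second block of variables. -/
noncomputable def paramSubst (φ : L.Formula (Fin n ⊕ Fin m)) (a : Fin m → ↥B) :
    L.Formula (Fin n ⊕ ↥B) :=
  φ.relabel (Sum.elim Sum.inl fun k => Sum.inr (a k))

theorem realize_paramSubst (φ : L.Formula (Fin n ⊕ Fin m)) (a : Fin m → ↥B)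
    (c : Fin n → M) :
    (paramSubst φ a).Realize (Sum.elim c (Subtype.val : ↥B → M)) ↔
      φ.Realize (Sum.elim c fun k => (a k : M)) := by
  have hv : (Sum.elim c (Subtype.val : ↥B → M)) ∘ (Sum.elim Sum.inl fun k => Sum.inr (a k))
      = Sum.elim c (fun k => (a k : M)) := by funext x; cases x <;> rfl
  rw [paramSubst, Formula.realize_relabel, hv]

/-- Substitute parameters (from a set `B`) into the first block of variables. -/
noncomputable def leftSubst (θ : L.Formula (Fin n ⊕ Fin m)) (dd : Fin n → ↥B) :
    L.Formula (Fin m ⊕ ↥B) :=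
  θ.relabel (Sum.elim (fun k => Sum.inr (dd k)) Sum.inl)

theorem realize_leftSubst (θ : L.Formula (Fin n ⊕ Fin m)) (dd : Fin n → ↥B)
    (bb : Fin m → M) :
    (leftSubst θ dd).Realize (Sum.elim bb (Subtype.val : ↥B → M)) ↔
      θ.Realize (Sum.elim (fun k => (dd k : M)) bb) := by
  have hv : (Sum.elim bb (Subtype.val : ↥B → M)) ∘
      (Sum.elim (fun k => Sum.inr (dd k)) Sum.inl)
      = Sum.elim (fun k => (dd k : M)) bb := by funext x; cases x <;> rfl
  rw [leftSubst, Formula.realize_relabel, hv]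

/-- The formula `∀ x (θ(x; z) → φ(x; a))`, with free variables `z` and parameters from `B`. -/
noncomputable def impAllForm (θ : L.Formula (Fin n ⊕ Fin mzv))
    (φ : L.Formula (Fin n ⊕ Fin m)) (a : Fin m → ↥B) : L.Formula (Fin mzv ⊕ ↥B) :=
  ((θ.relabel (Sum.map id Sum.inl)).imp
    (φ.relabel (Sum.elim Sum.inl fun k => Sum.inr (Sum.inr (a k))))).relabel
    (Sum.elim Sum.inr Sum.inl) |>.iAlls (Fin n)

theorem realize_impAllForm (θ : L.Formula (Fin n ⊕ Fin mzv))
    (φ : L.Formula (Fin n ⊕ Fin m)) (a : Fin m → ↥B) (bb : Fin mzv → M) :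
    (impAllForm θ φ a).Realize (Sum.elim bb (Subtype.val : ↥B → M)) ↔
      ∀ c : Fin n → M, θ.Realize (Sum.elim c bb) →
        φ.Realize (Sum.elim c fun k => (a k : M)) := by
  rw [impAllForm, Formula.realize_iAlls]
  refine forall_congr' fun c => ?_
  rw [Formula.realize_relabel]
  simp only [Function.comp_def]
  have h1 : (fun y => Sum.elim (Sum.elim bb (Subtype.val : ↥B → M)) c
      ((Sum.elim Sum.inr Sum.inl : (Fin n ⊕ (Fin mzv ⊕ ↥B)) → (Fin mzv ⊕ ↥B) ⊕ Fin n) y))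
      = Sum.elim c (Sum.elim bb (Subtype.val : ↥B → M)) := by funext x; cases x <;> rfl
  rw [h1, Formula.realize_imp, Formula.realize_relabel, Formula.realize_relabel]
  have h2 : Sum.elim c (Sum.elim bb (Subtype.val : ↥B → M)) ∘ Sum.map id Sum.inl
      = Sum.elim c bb := by funext x; cases x <;> rfl
  have h3 : Sum.elim c (Sum.elim bb (Subtype.val : ↥B → M)) ∘
      (Sum.elim Sum.inl fun k => Sum.inr (Sum.inr (a k)))
      = Sum.elim c (fun k => (a k : M)) := by funext x; cases x <;> rfl
  rw [h2, h3]

end SingularCompactnessHelpers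

/-- a criterion for singular compactness: if for every `φ(x, y) ∈ Δ`
there is `θ_φ(x, z)` such that for every model `N ⊨ T`, every finite `φ`-type `r(x)` over
`N` and every finite set of realizations of `r` there is `b` with `θ_φ(a, b)` for all such
realizations `a` and `θ_φ(x, b) ⊢ r(x)`, then `T` has singular compactness for `Δ`: every
`μ`-saturated model of `T`, for singular `μ > |T|`, realizes every `Δ`-type over a
parameter set of size `≤ μ`. -/
theorem singular_compactness_criterion
    {L : FirstOrder.Language.{u, u}} (T : L.Theory) (hT : T.IsComplete)
    (mx my : ℕ) (Δ : Set (L.Formula (Fin mx ⊕ Fin my)))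
    (hcond : ∀ φ ∈ Δ, ∃ (mz : ℕ) (θ : L.Formula (Fin mx ⊕ Fin mz)),
      ∀ (N : Type u) [inst : L.Structure N], N ⊨ T →
        ∀ (s t : ℕ) (r : Fin s → Fin my → N) (Av : Fin t → Fin mx → N),
          (∃ c : Fin mx → N, ∀ i, Formula.Realize φ (Sum.elim c (r i))) →
          (∀ j i, Formula.Realize φ (Sum.elim (Av j) (r i))) →
          ∃ b : Fin mz → N,
            (∀ j, Formula.Realize θ (Sum.elim (Av j) b)) ∧
            ∀ c : Fin mx → N, Formula.Realize θ (Sum.elim c b) →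
              ∀ i, Formula.Realize φ (Sum.elim c (r i)))
    (μ : Cardinal.{u}) (hμinf : ℵ₀ ≤ μ) (hsing : μ.ord.cof < μ) (hμT : L.card + ℵ₀ < μ)
    (N : Type u) [L.Structure N] (hN : N ⊨ T) (hsat : IsSaturatedModel L N μ)
    (A : Set N) (hA : #A ≤ μ)
    (p : Set ((L.Formula (Fin mx ⊕ Fin my)) × (Fin my → N)))
    (hpΔ : ∀ q ∈ p, q.1 ∈ Δ) (hparams : ∀ q ∈ p, ∀ i, q.2 i ∈ A)
    (hcons : ∀ F : Finset ((L.Formula (Fin mx ⊕ Fin my)) × (Fin my → N)), ↑F ⊆ p →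
      ∃ c : Fin mx → N, ∀ q ∈ F, Formula.Realize q.1 (Sum.elim c q.2)) :
    ∃ c : Fin mx → N, ∀ q ∈ p, Formula.Realize q.1 (Sum.elim c q.2) := by
  classical
  -- dispose of the trivial case `p = ∅`
  rcases Set.eq_empty_or_nonempty p with rfl | hpne
  · obtain ⟨c, -⟩ := hcons ∅ (by simp)
    exact ⟨c, by simp⟩
  -- Skolemize the hypothesis at `N`
  have hcond2 : ∀ φ : L.Formula (Fin mx ⊕ Fin my),
      ∃ (mzv : ℕ) (θv : L.Formula (Fin mx ⊕ Fin mzv)), φ ∈ Δ →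
        ∀ (s t : ℕ) (r : Fin s → Fin my → N) (Av : Fin t → Fin mx → N),
          (∃ c : Fin mx → N, ∀ i, Formula.Realize φ (Sum.elim c (r i))) →
          (∀ j i, Formula.Realize φ (Sum.elim (Av j) (r i))) →
          ∃ b : Fin mzv → N,
            (∀ j, Formula.Realize θv (Sum.elim (Av j) b)) ∧
            ∀ c : Fin mx → N, Formula.Realize θv (Sum.elim c b) →
              ∀ i, Formula.Realize φ (Sum.elim c (r i)) := by
    intro φ
    by_cases hφ : φ ∈ Δ
    · obtain ⟨mzv, θv, h⟩ := hcond φ hφ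
      exact ⟨mzv, θv, fun _ => h N hN⟩
    · exact ⟨0, BoundedFormula.falsum, fun h => absurd h hφ⟩
  choose mz θ hθ using hcond2
  -- basic cardinal facts
  have haleph : ℵ₀ < μ := lt_of_le_of_lt (self_le_add_left ℵ₀ L.card) hμT
  have hone : (1 : Cardinal.{u}) < μ := lt_of_lt_of_le Cardinal.one_lt_aleph0 hμinf
  -- cofinal index family
  have hord0 : μ.ord ≠ 0 := by
    intro h
    have h2 := congrArg Ordinal.card h
    rw [Cardinal.card_ord] at h2
    simp only [Ordinal.card_zero] at h2
    rw [h2] at hμinf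
    exact absurd hμinf (by simp [Cardinal.aleph0_ne_zero])
  haveI hne : Nonempty μ.ord.ToType := Ordinal.toType_nonempty_iff_ne_zero.2 hord0
  haveI : IsWellOrder μ.ord.ToType (· < ·) := isWellOrder_lt
  obtain ⟨S, hSu, hScard⟩ :=
    Order.exists_cof_eq μ.ord.ToType
  rw [Ordinal.cof_toType] at hScard
  have hιμ : #(↥S) < μ := by rw [hScard]; exact hsing
  have hSne : S.Nonempty := by
    obtain ⟨s, hs, -⟩ := hSu (Classical.arbitrary _)
    exact ⟨s, hs⟩
  haveI : Nonempty ↥S := hSne.to_subtype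
  -- an enumeration of `A` and the induced filtration
  have hAle : #(↥A) ≤ #(μ.ord.ToType) := by
    rw [Cardinal.mk_ord_toType]; exact hA
  obtain ⟨g⟩ := (Cardinal.le_def _ _).1 hAle
  set AS : ↥S → Set N := fun i => Subtype.val '' {x : ↥A | g x ≤ (i : μ.ord.ToType)}
    with hASdef
  have hASsub : ∀ i, AS i ⊆ A := by rintro i a ⟨x, -, rfl⟩; exact x.2
  have hmono : ∀ {i j : ↥S}, i ≤ j → AS i ⊆ AS j := by
    rintro i j hij a ⟨x, hx, rfl⟩
    exact ⟨x, le_trans hx (Subtype.coe_le_coe.2 hij), rfl⟩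
  have hAScard : ∀ i, #(AS i) < μ := by
    intro i
    have h1 : #(AS i) ≤ #{x : ↥A | g x ≤ (i : μ.ord.ToType)} := Cardinal.mk_image_le
    have h2 : #{x : ↥A | g x ≤ (i : μ.ord.ToType)} ≤
        #(Option {y : μ.ord.ToType // y < (i : μ.ord.ToType)}) := by
      refine Cardinal.mk_le_of_injective (f := fun x =>
        if h : g x.1 < (i : μ.ord.ToType) then some ⟨g x.1, h⟩ else none) ?_
      intro x y hxy
      have hx2 : g x.1 ≤ (i : μ.ord.ToType) := x.2
      have hy2 : g y.1 ≤ (i : μ.ord.ToType) := y.2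
      by_cases hx : g x.1 < (i : μ.ord.ToType) <;>
        by_cases hy : g y.1 < (i : μ.ord.ToType) <;>
          simp only [hx, hy, dif_pos, dif_neg, not_false_iff, Option.some.injEq,
            Subtype.mk.injEq, reduceCtorEq] at hxy
      · exact Subtype.ext (g.injective hxy)
      · refine Subtype.ext (g.injective ?_)
        rw [le_antisymm hx2 (not_lt.1 hx), le_antisymm hy2 (not_lt.1 hy)]
    have h3 : #{y : μ.ord.ToType // y < (i : μ.ord.ToType)} < μ := by
      have h4 := Ordinal.typein_lt_type
        ((· < ·) : μ.ord.ToType → μ.ord.ToType → Prop) (i : μ.ord.ToType)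
      rw [Ordinal.type_toType] at h4
      rw [← Ordinal.card_typein]
      exact Cardinal.lt_ord.1 h4
    refine lt_of_le_of_lt (le_trans h1 h2) ?_
    rw [Cardinal.mk_option]
    exact Cardinal.add_lt_of_lt hμinf h3 hone
  -- covering finite subsets of `A`
  have hcov : ∀ G : Finset N, ↑G ⊆ A → ∃ i : ↥S, ∀ a ∈ G, a ∈ AS i := by
    intro G
    induction G using Finset.induction_on with
    | empty => exact fun _ => ⟨Classical.arbitrary _, by simp⟩
    | @insert a G ha ih =>
      intro hins
      obtain ⟨i1, hi1⟩ := ih (fun x hx => hins (Finset.mem_insert_of_mem hx))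
      have haA : a ∈ A := hins (Finset.mem_insert_self a G)
      obtain ⟨s0, hs0S, hs0⟩ := hSu (g ⟨a, haA⟩)
      have hmem : a ∈ AS ⟨s0, hs0S⟩ := ⟨⟨a, haA⟩, hs0, rfl⟩
      refine ⟨max ⟨s0, hs0S⟩ i1, fun x hx => ?_⟩
      rcases Finset.mem_insert.1 hx with rfl | hx
      · exact hmono (le_max_left _ _) hmem
      · exact hmono (le_max_right _ _) (hi1 x hx)
  -- realizations of the restricted types
  have hdex : ∀ i : ↥S, ∃ dd : Fin mx → N, ∀ q ∈ p, (∀ k, q.2 k ∈ AS i) →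
      Formula.Realize q.1 (Sum.elim dd q.2) := by
    intro i
    set pF : Set (L.Formula (Fin mx ⊕ ↥(AS i))) :=
      {ψ | ∃ (φv : L.Formula (Fin mx ⊕ Fin my)) (aa : Fin my → ↥(AS i)),
        (φv, fun k => (aa k : N)) ∈ p ∧ ψ = paramSubst φv aa} with hpFdef
    have hfs : FinSat (AS i) pF := by
      intro F hF
      have hch : ∀ ψ : {ψ // ψ ∈ F},
          ∃ qq : (L.Formula (Fin mx ⊕ Fin my)) × (Fin my → ↥(AS i)),
            (qq.1, fun k => (qq.2 k : N)) ∈ p ∧ ψ.1 = paramSubst qq.1 qq.2 := by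
        intro ψ
        obtain ⟨φv, aa, h1, h2⟩ := hF ψ.2
        exact ⟨(φv, aa), h1, h2⟩
      choose qf hqf1 hqf2 using hch
      obtain ⟨c, hc⟩ := hcons
        ((Finset.univ.image qf).image fun qq => (qq.1, fun k => (qq.2 k : N)))
        (by
          intro q hq
          simp only [Finset.coe_image, Set.mem_image, Finset.mem_coe,
            Finset.mem_image, Finset.mem_univ] at hq
          obtain ⟨qq, ⟨ψ, -, rfl⟩, rfl⟩ := hq
          exact hqf1 ψ)
      refine ⟨c, fun ψ hψ => ?_⟩
      rw [show ψ = (⟨ψ, hψ⟩ : {ψ // ψ ∈ F}).1 from rfl, hqf2 ⟨ψ, hψ⟩,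
        realize_paramSubst]
      exact hc _ (Finset.mem_image_of_mem _
        (Finset.mem_image_of_mem qf (Finset.mem_univ ⟨ψ, hψ⟩)))
    obtain ⟨dd, hdd⟩ := hsat mx (AS i) pF (hAScard i) hfs
    refine ⟨dd, fun q hq hk => ?_⟩
    have hmem : paramSubst q.1 (fun k => (⟨q.2 k, hk k⟩ : ↥(AS i))) ∈ pF :=
      ⟨q.1, fun k => ⟨q.2 k, hk k⟩, hq, rfl⟩
    have h5 := hdd _ hmem
    rw [realize_paramSubst] at h5
    exact h5
  choose d hd using hdex
  -- the key compression step: choosing the parameters `b φ i`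
  have hbex : ∀ (x : {φ : L.Formula (Fin mx ⊕ Fin my) // ∃ a, (φ, a) ∈ p}) (i : ↥S),
      ∃ bb : Fin (mz x.1) → N,
        (∀ j, i ≤ j → Formula.Realize (θ x.1) (Sum.elim (d j) bb)) ∧
        (∀ a : Fin my → N, (x.1, a) ∈ p → (∀ k, a k ∈ AS i) →
          ∀ c : Fin mx → N, Formula.Realize (θ x.1) (Sum.elim c bb) →
            Formula.Realize x.1 (Sum.elim c a)) := by
    intro x i
    obtain ⟨a0, ha0⟩ := x.2
    have hxΔ : x.1 ∈ Δ := hpΔ _ ha0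
    set P : Set N := AS i ∪ ⋃ j : ↥S, Set.range (d j) with hPdef
    have hdP : ∀ (j : ↥S) k, d j k ∈ P := fun j k =>
      Set.mem_union_right _ (Set.mem_iUnion.2 ⟨j, Set.mem_range_self k⟩)
    have hPcard : #(↥P) < μ := by
      refine lt_of_le_of_lt (Cardinal.mk_union_le _ _) ?_
      refine Cardinal.add_lt_of_lt hμinf (hAScard i) ?_
      refine lt_of_le_of_lt (Cardinal.mk_iUnion_le _) ?_
      refine Cardinal.mul_lt_of_lt hμinf hιμ ?_
      refine lt_of_le_of_lt (ciSup_le' fun j => ?_) haleph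
      haveI := (Set.finite_range (d j)).to_subtype
      exact le_of_lt (Cardinal.lt_aleph0_of_finite _)
    set sigT : Set (L.Formula (Fin (mz x.1) ⊕ ↥P)) :=
      {ψ | ∃ j : ↥S, i ≤ j ∧ ψ = leftSubst (θ x.1) (fun k => ⟨d j k, hdP j k⟩)} ∪
      {ψ | ∃ aa : Fin my → ↥P, ((x.1, fun k => (aa k : N)) ∈ p) ∧
        (∀ k, (aa k : N) ∈ AS i) ∧ ψ = impAllForm (θ x.1) x.1 aa} with hsigTdef
    have hfs : FinSat P sigT := by
      intro F hF
      set Ft : Finset {ψ // ψ ∈ F} := Finset.univ.filter (fun ψ =>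
        ∃ j : ↥S, i ≤ j ∧ ψ.1 = leftSubst (θ x.1) (fun k => ⟨d j k, hdP j k⟩)) with hFtdef
      have hFt1 : ∀ ψ ∈ Ft, ∃ j : ↥S, i ≤ j ∧
          ψ.1 = leftSubst (θ x.1) (fun k => ⟨d j k, hdP j k⟩) :=
        fun ψ h => (Finset.mem_filter.1 h).2
      choose jOf hjOf1 hjOf2 using hFt1
      have hFt2 : ∀ ψ : {ψ // ψ ∈ F}, ψ ∉ Ft →
          ∃ aa : Fin my → ↥P, ((x.1, fun k => (aa k : N)) ∈ p) ∧
            (∀ k, (aa k : N) ∈ AS i) ∧ ψ.1 = impAllForm (θ x.1) x.1 aa := by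
        intro ψ h
        rcases (Set.mem_union _ _ _).1 (hF ψ.2) with h1 | h2
        · obtain ⟨j, hj1, hj2⟩ := h1
          exact absurd (Finset.mem_filter.2 ⟨Finset.mem_univ ψ, ⟨j, hj1, hj2⟩⟩) h
        · exact h2
      choose aOf haOf1 haOf2 haOf3 using hFt2
      let eT := Ft.equivFin
      let eC := Ftᶜ.equivFin
      have hnotin : ∀ l : Fin Ftᶜ.card, (eC.symm l).1 ∉ Ft :=
        fun l => Finset.mem_compl.1 (eC.symm l).2
      have hcons' : ∃ c : Fin mx → N, ∀ l : Fin Ftᶜ.card,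
          Formula.Realize x.1
            (Sum.elim c (fun k => ((aOf (eC.symm l).1 (hnotin l)) k : N))) := by
        refine ⟨d i, fun l => ?_⟩
        exact hd i (x.1, fun k => ((aOf (eC.symm l).1 (hnotin l)) k : N))
          (haOf1 _ (hnotin l)) (haOf2 _ (hnotin l))
      have hAvr : ∀ (l : Fin Ft.card) (l' : Fin Ftᶜ.card),
          Formula.Realize x.1 (Sum.elim (d (jOf (eT.symm l).1 (eT.symm l).2))
            (fun k => ((aOf (eC.symm l').1 (hnotin l')) k : N))) := by
        intro l l'
        have hij := hjOf1 (eT.symm l).1 (eT.symm l).2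
        exact hd (jOf (eT.symm l).1 (eT.symm l).2)
          (x.1, fun k => ((aOf (eC.symm l').1 (hnotin l')) k : N))
          (haOf1 _ (hnotin l')) (fun k => hmono hij (haOf2 _ (hnotin l') k))
      obtain ⟨bb, hbb1, hbb2⟩ := hθ x.1 hxΔ Ftᶜ.card Ft.card
        (fun l k => ((aOf (eC.symm l).1 (hnotin l)) k : N))
        (fun l => d (jOf (eT.symm l).1 (eT.symm l).2)) hcons' hAvr
      refine ⟨bb, fun ψ hψ => ?_⟩
      by_cases hmemt : (⟨ψ, hψ⟩ : {ψ // ψ ∈ F}) ∈ Ft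
      · rw [show ψ = (⟨ψ, hψ⟩ : {ψ // ψ ∈ F}).1 from rfl, hjOf2 _ hmemt,
          realize_leftSubst]
        have h6 := hbb1 (eT ⟨⟨ψ, hψ⟩, hmemt⟩)
        simpa only [Equiv.symm_apply_apply] using h6
      · have hC : (⟨ψ, hψ⟩ : {ψ // ψ ∈ F}) ∈ Ftᶜ := Finset.mem_compl.2 hmemt
        rw [show ψ = (⟨ψ, hψ⟩ : {ψ // ψ ∈ F}).1 from rfl, haOf3 _ hmemt,
          realize_impAllForm]
        intro c hc
        have h6 := hbb2 c hc (eC ⟨⟨ψ, hψ⟩, hC⟩)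
        simpa only [Equiv.symm_apply_apply] using h6
    obtain ⟨bb, hbbsig⟩ := hsat (mz x.1) P sigT hPcard hfs
    refine ⟨bb, ?_, ?_⟩
    · intro j hij
      have hmem : leftSubst (θ x.1) (fun k => ⟨d j k, hdP j k⟩) ∈ sigT :=
        Set.mem_union_left _ ⟨j, hij, rfl⟩
      have h7 := hbbsig _ hmem
      rw [realize_leftSubst] at h7
      exact h7
    · intro a hap hAs c hc
      have hmem : impAllForm (θ x.1) x.1
          (fun k => (⟨a k, Set.mem_union_left _ (hAs k)⟩ : ↥P)) ∈ sigT :=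
        Set.mem_union_right _ ⟨fun k => ⟨a k, Set.mem_union_left _ (hAs k)⟩, hap, hAs, rfl⟩
      have h7 := hbbsig _ hmem
      rw [realize_impAllForm] at h7
      exact h7 c hc
  choose b hb1 hb2 using hbex
  -- the final type
  obtain ⟨q0, hq0⟩ := hpne
  haveI : Nonempty {φ : L.Formula (Fin mx ⊕ Fin my) // ∃ a, (φ, a) ∈ p} :=
    ⟨⟨q0.1, q0.2, hq0⟩⟩
  have hΦcard : #{φ : L.Formula (Fin mx ⊕ Fin my) // ∃ a, (φ, a) ∈ p} < μ := by
    have h1 : #{φ : L.Formula (Fin mx ⊕ Fin my) // ∃ a, (φ, a) ∈ p} ≤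
        #(L.Formula (Fin mx ⊕ Fin my)) := Cardinal.mk_subtype_le _
    have h2 : #(L.Formula (Fin mx ⊕ Fin my)) ≤
        #(Sigma fun nn => L.BoundedFormula (Fin mx ⊕ Fin my) nn) :=
      Cardinal.mk_le_of_injective (f := fun φ => ⟨0, φ⟩)
        (fun a b h => by simpa using h)
    have h3 := BoundedFormula.card_le (L := L) (α := Fin mx ⊕ Fin my)
    refine lt_of_le_of_lt (le_trans h1 (le_trans h2 h3)) ?_
    refine max_lt haleph ?_
    refine lt_of_le_of_lt ?_ hμT
    rw [Cardinal.lift_uzero]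
    calc Cardinal.lift.{u} #(Fin mx ⊕ Fin my) + L.card
        ≤ ℵ₀ + L.card := by
          refine add_le_add ?_ le_rfl
          exact le_of_lt (Cardinal.lift_lt_aleph0.2 (Cardinal.lt_aleph0_of_finite _))
      _ = L.card + ℵ₀ := add_comm _ _
  set P' : Set N := ⋃ (x : {φ : L.Formula (Fin mx ⊕ Fin my) // ∃ a, (φ, a) ∈ p})
      (i : ↥S), Set.range (b x i) with hP'def
  have hbP' : ∀ x i l, b x i l ∈ P' := fun x i l =>
    Set.mem_iUnion.2 ⟨x, Set.mem_iUnion.2 ⟨i, Set.mem_range_self l⟩⟩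
  have hP'card : #(↥P') < μ := by
    refine lt_of_le_of_lt (Cardinal.mk_iUnion_le _) ?_
    refine Cardinal.mul_lt_of_lt hμinf hΦcard ?_
    refine lt_of_le_of_lt (ciSup_le' fun x => ?_)
      (Cardinal.mul_lt_of_lt hμinf hιμ haleph)
    refine le_trans (Cardinal.mk_iUnion_le _) ?_
    refine mul_le_mul' le_rfl (ciSup_le' fun i => ?_)
    haveI := (Set.finite_range (b x i)).to_subtype
    exact le_of_lt (Cardinal.lt_aleph0_of_finite _)
  set qT : Set (L.Formula (Fin mx ⊕ ↥P')) :=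
    {ψ | ∃ (x : {φ : L.Formula (Fin mx ⊕ Fin my) // ∃ a, (φ, a) ∈ p}) (i : ↥S),
      ψ = paramSubst (θ x.1) (fun l => ⟨b x i l, hbP' x i l⟩)} with hqTdef
  have hfs : FinSat P' qT := by
    intro F hF
    have hch : ∀ ψ : {ψ // ψ ∈ F},
        ∃ (x : {φ : L.Formula (Fin mx ⊕ Fin my) // ∃ a, (φ, a) ∈ p}) (i : ↥S),
          ψ.1 = paramSubst (θ x.1) (fun l => ⟨b x i l, hbP' x i l⟩) := fun ψ => hF ψ.2
    choose xOf iOf hOf using hch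
    obtain ⟨jb, hjb⟩ := Finset.exists_le (Finset.univ.image iOf)
    refine ⟨d jb, fun ψ hψ => ?_⟩
    rw [show ψ = (⟨ψ, hψ⟩ : {ψ // ψ ∈ F}).1 from rfl, hOf ⟨ψ, hψ⟩, realize_paramSubst]
    exact hb1 (xOf ⟨ψ, hψ⟩) (iOf ⟨ψ, hψ⟩) jb
      (hjb _ (Finset.mem_image_of_mem iOf (Finset.mem_univ _)))
  obtain ⟨cstar, hcstar⟩ := hsat mx P' qT hP'card hfs
  refine ⟨cstar, fun q hq => ?_⟩
  obtain ⟨i, hi⟩ := hcov (Finset.univ.image q.2) (by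
    intro a ha
    simp only [Finset.coe_image, Set.mem_image, Finset.mem_coe, Finset.mem_univ,
      Finset.coe_univ, Set.image_univ, Set.mem_range] at ha
    obtain ⟨k, rfl⟩ := ha
    exact hparams q hq k)
  have hAs : ∀ k, q.2 k ∈ AS i := fun k =>
    hi _ (Finset.mem_image_of_mem q.2 (Finset.mem_univ k))
  have hx : ∃ a, (q.1, a) ∈ p := ⟨q.2, hq⟩
  have hθreal : Formula.Realize (θ q.1)
      (Sum.elim cstar (b ⟨q.1, hx⟩ i)) := by
    have h8 := hcstar _ (⟨⟨q.1, hx⟩, i, rfl⟩ :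
      _ ∈ qT)
    rw [realize_paramSubst] at h8
    exact h8
  exact hb2 ⟨q.1, hx⟩ i q.2 hq hAs cstar hθreal

end ShredPaper
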